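/- Unbiasedness of the IPW estimating function (equation (6), proved in the proof of Proposition 2). Under the above setup, for all bounded measurable functions t and l, E[ ((1−A)/(1−π)) · t(Y₀, C) · ( l(Z, C) − E[ l(Z, C) | σ(C) ] ) ] = 0. -/

import Mathlib

open MeasureTheory

open Set Filter

namespace IPWAux

variable {Ω : Type*} {mΩ : MeasurableSpace Ω} {P : Measure Ω} [IsProbabilityMeasure P]

lemma integrable_of_bdd {f : Ω → ℝ} (hf : AEStronglyMeasurable f P) {M : ℝ}
    (hb : ∀ ω, |f ω| ≤ M) : Integrable f P :=
  ⟨hf, HasFiniteIntegral.of_bounded (C := M)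
    (Eventually.of_forall fun ω => by simpa [Real.norm_eq_abs] using hb ω)⟩

lemma integral_mul_condexp_symm {mC : MeasurableSpace Ω} (hm : mC ≤ mΩ)
    {u v : Ω → ℝ} (hu : Measurable[mΩ] u) (hv : Measurable[mΩ] v)
    {Mu Mv : ℝ} (hub : ∀ ω, |u ω| ≤ Mu) (hvb : ∀ ω, |v ω| ≤ Mv) :
    ∫ ω, u ω * (P[v|mC]) ω ∂P = ∫ ω, (P[u|mC]) ω * v ω ∂P := by
  have hui : Integrable u P := integrable_of_bdd hu.aestronglyMeasurable hub
  have hvi : Integrable v P := integrable_of_bdd hv.aestronglyMeasurable hvb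
  have h1 : Integrable (fun ω => u ω * (P[v|mC]) ω) P :=
    (integrable_condExp).bdd_mul hu.aestronglyMeasurable
      (c := Mu) (Eventually.of_forall fun ω => by simpa [Real.norm_eq_abs] using hub ω)
  have h2 : Integrable (fun ω => (P[u|mC]) ω * v ω) P := by
    have := hvi.bdd_mul (f := u) (c := Mu) hu.aestronglyMeasurable
    exact ((integrable_condExp (f := u) (m := mC) (μ := P)).bdd_mul
      hv.aestronglyMeasurable (c := Mv) (Eventually.of_forall fun ω => by simpa [Real.norm_eq_abs] using hvb ω)).congr
      (Eventually.of_forall fun ω => mul_comm _ _)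
  have e1 : P[fun ω => (P[v|mC]) ω * u ω|mC]
      =ᵐ[P] fun ω => (P[v|mC]) ω * (P[u|mC]) ω := by
    have := condExp_mul_of_stronglyMeasurable_left (μ := P) (m := mC)
      (f := P[v|mC]) (g := u) stronglyMeasurable_condExp
      (h1.congr (Eventually.of_forall fun ω => mul_comm _ _)) hui
    exact this
  have e2 : P[fun ω => (P[u|mC]) ω * v ω|mC]
      =ᵐ[P] fun ω => (P[u|mC]) ω * (P[v|mC]) ω := by
    have := condExp_mul_of_stronglyMeasurable_left (μ := P) (m := mC)
      (f := P[u|mC]) (g := v) stronglyMeasurable_condExp h2 hvi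
    exact this
  calc ∫ ω, u ω * (P[v|mC]) ω ∂P
      = ∫ ω, (P[v|mC]) ω * u ω ∂P := by simp_rw [mul_comm]
    _ = ∫ ω, (P[fun ω => (P[v|mC]) ω * u ω|mC]) ω ∂P :=
        (integral_condExp hm).symm
    _ = ∫ ω, (P[v|mC]) ω * (P[u|mC]) ω ∂P := integral_congr_ae e1
    _ = ∫ ω, (P[fun ω => (P[u|mC]) ω * v ω|mC]) ω ∂P := by
        rw [integral_congr_ae e2]; simp_rw [mul_comm]
    _ = ∫ ω, (P[u|mC]) ω * v ω ∂P := integral_condExp hm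

lemma map_withDensity_apply {γ : Type*} [MeasurableSpace γ]
    {X : Ω → γ} (hX : Measurable X) {w : Ω → ℝ}
    (hwi : Integrable w P) (hw0 : 0 ≤ᵐ[P] w) {S : Set γ} (hS : MeasurableSet S) :
    Measure.map X (P.withDensity fun ω => ENNReal.ofReal (w ω)) S
      = ENNReal.ofReal (∫ ω, Set.indicator S (fun _ => (1:ℝ)) (X ω) * w ω ∂P) := by
  have hint : Integrable (fun ω => Set.indicator S (fun _ => (1:ℝ)) (X ω) * w ω) P :=
    hwi.bdd_mul (((measurable_one.indicator hS).comp hX).aestronglyMeasurable)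
      (c := 1) (Eventually.of_forall fun ω => by
        by_cases h : X ω ∈ S <;> simp [Set.indicator_apply, h])
  have hnn : 0 ≤ᵐ[P] fun ω => Set.indicator S (fun _ => (1:ℝ)) (X ω) * w ω := by
    filter_upwards [hw0] with ω hω
    exact mul_nonneg (Set.indicator_nonneg (fun _ _ => zero_le_one) _) hω
  rw [Measure.map_apply hX hS, withDensity_apply _ (hX hS),
    ← lintegral_indicator (hX hS), ofReal_integral_eq_lintegral_ofReal hint hnn]
  refine lintegral_congr fun ω => ?_
  by_cases h : X ω ∈ S <;>
    simp [Set.indicator_apply, h, Set.mem_preimage]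

lemma pairing_eq_of_rect {α β : Type*} [MeasurableSpace α] [MeasurableSpace β]
    {X : Ω → α} {W : Ω → β} (hX : Measurable[mΩ] X) (hW : Measurable[mΩ] W)
    {w₁ w₂ : Ω → ℝ}
    (hw₁ : Integrable w₁ P) (hw₂ : Integrable w₂ P)
    (hw₁0 : 0 ≤ᵐ[P] w₁) (hw₂0 : 0 ≤ᵐ[P] w₂)
    (hrect : ∀ U V, MeasurableSet U → MeasurableSet V →
      ∫ ω, Set.indicator (U ×ˢ V) (fun _ => (1:ℝ)) (X ω, W ω) * w₁ ω ∂P =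
      ∫ ω, Set.indicator (U ×ˢ V) (fun _ => (1:ℝ)) (X ω, W ω) * w₂ ω ∂P)
    (huniv : ∫ ω, w₁ ω ∂P = ∫ ω, w₂ ω ∂P) :
    ∀ S : Set (α × β), MeasurableSet S →
      ∫ ω, Set.indicator S (fun _ => (1:ℝ)) (X ω, W ω) * w₁ ω ∂P =
      ∫ ω, Set.indicator S (fun _ => (1:ℝ)) (X ω, W ω) * w₂ ω ∂P := by
  have hXW : Measurable fun ω => (X ω, W ω) := hX.prodMk hW
  set μ₁ := Measure.map (fun ω => (X ω, W ω)) (P.withDensity fun ω => ENNReal.ofReal (w₁ ω))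
  set μ₂ := Measure.map (fun ω => (X ω, W ω)) (P.withDensity fun ω => ENNReal.ofReal (w₂ ω))
  have key₁ : ∀ S : Set (α × β), MeasurableSet S →
      μ₁ S = ENNReal.ofReal (∫ ω, Set.indicator S (fun _ => (1:ℝ)) (X ω, W ω) * w₁ ω ∂P) :=
    fun S hS => map_withDensity_apply hXW hw₁ hw₁0 hS
  have key₂ : ∀ S : Set (α × β), MeasurableSet S →
      μ₂ S = ENNReal.ofReal (∫ ω, Set.indicator S (fun _ => (1:ℝ)) (X ω, W ω) * w₂ ω ∂P) :=
    fun S hS => map_withDensity_apply hXW hw₂ hw₂0 hS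
  haveI : IsFiniteMeasure μ₁ := ⟨by rw [key₁ _ MeasurableSet.univ]; exact ENNReal.ofReal_lt_top⟩
  haveI : IsFiniteMeasure μ₂ := ⟨by rw [key₂ _ MeasurableSet.univ]; exact ENNReal.ofReal_lt_top⟩
  have hμ : μ₁ = μ₂ := by
    refine ext_of_generate_finite _ generateFrom_prod.symm isPiSystem_prod ?_ ?_
    · rintro s ⟨U, hU, V, hV, rfl⟩
      rw [key₁ _ ((hU : MeasurableSet U).prod hV), key₂ _ ((hU : MeasurableSet U).prod hV),
        hrect U V hU hV]
    · rw [key₁ _ MeasurableSet.univ, key₂ _ MeasurableSet.univ]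
      simp only [Set.indicator_univ, one_mul]
      rw [huniv]
  intro S hS
  have h1 : μ₁ S = μ₂ S := by rw [hμ]
  rw [key₁ _ hS, key₂ _ hS] at h1
  have hnn1 : 0 ≤ ∫ ω, Set.indicator S (fun _ => (1:ℝ)) (X ω, W ω) * w₁ ω ∂P := by
    refine integral_nonneg_of_ae ?_
    filter_upwards [hw₁0] with ω hω
    exact mul_nonneg (Set.indicator_nonneg (fun _ _ => zero_le_one) _) hω
  have hnn2 : 0 ≤ ∫ ω, Set.indicator S (fun _ => (1:ℝ)) (X ω, W ω) * w₂ ω ∂P := by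
    refine integral_nonneg_of_ae ?_
    filter_upwards [hw₂0] with ω hω
    exact mul_nonneg (Set.indicator_nonneg (fun _ _ => zero_le_one) _) hω
  exact (ENNReal.ofReal_eq_ofReal_iff hnn1 hnn2).mp h1

lemma pairing_ext {γ : Type*} [MeasurableSpace γ] {X : Ω → γ} (hX : Measurable[mΩ] X)
    {w₁ w₂ : Ω → ℝ} (hw₁ : Integrable w₁ P) (hw₂ : Integrable w₂ P)
    (h : ∀ S : Set γ, MeasurableSet S →
      ∫ ω, Set.indicator S (fun _ => (1:ℝ)) (X ω) * w₁ ω ∂P =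
      ∫ ω, Set.indicator S (fun _ => (1:ℝ)) (X ω) * w₂ ω ∂P) :
    ∀ f : γ → ℝ, Measurable f → (∃ M, ∀ x, |f x| ≤ M) →
      ∫ ω, f (X ω) * w₁ ω ∂P = ∫ ω, f (X ω) * w₂ ω ∂P := by
  have hint : ∀ (g : γ → ℝ), Measurable g → (∃ M, ∀ x, |g x| ≤ M) → ∀ (w : Ω → ℝ),
      Integrable w P → Integrable (fun ω => g (X ω) * w ω) P := by
    intro g hg ⟨M, hM⟩ w hw
    exact hw.bdd_mul ((hg.comp hX).aestronglyMeasurable)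
      (c := M) (Eventually.of_forall fun ω => by simpa [Real.norm_eq_abs] using hM (X ω))
  have hsimp : ∀ g : SimpleFunc γ ℝ, ∫ ω, g (X ω) * w₁ ω ∂P = ∫ ω, g (X ω) * w₂ ω ∂P := by
    intro g
    induction g using SimpleFunc.induction with
    | const c hS =>
      rename_i S
      have hco : ∀ x, (SimpleFunc.piecewise S hS (SimpleFunc.const γ c)
          (SimpleFunc.const γ (0:ℝ))) x = c * Set.indicator S (fun _ => (1:ℝ)) x := by
        intro x
        by_cases hx : x ∈ S <;> simp [SimpleFunc.piecewise_apply, hx, Set.indicator_apply]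
      simp_rw [hco, mul_assoc]
      rw [integral_const_mul, integral_const_mul, h S hS]
    | @add f g hdisj hf hg =>
      have bf := f.exists_forall_norm_le
      have bg := g.exists_forall_norm_le
      have hf' : ∃ M, ∀ x, |(f : γ → ℝ) x| ≤ M := by
        obtain ⟨M, hM⟩ := bf; exact ⟨M, fun x => by simpa [Real.norm_eq_abs] using hM x⟩
      have hg' : ∃ M, ∀ x, |(g : γ → ℝ) x| ≤ M := by
        obtain ⟨M, hM⟩ := bg; exact ⟨M, fun x => by simpa [Real.norm_eq_abs] using hM x⟩
      simp_rw [SimpleFunc.coe_add, Pi.add_apply, add_mul]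
      rw [integral_add (hint f f.measurable hf' w₁ hw₁) (hint g g.measurable hg' w₁ hw₁),
        integral_add (hint f f.measurable hf' w₂ hw₂) (hint g g.measurable hg' w₂ hw₂),
        hf, hg]
  intro f hf ⟨M, hM⟩
  set fn := fun n => SimpleFunc.approxOn f hf Set.univ 0 (Set.mem_univ 0) n with hfn
  have htend : ∀ x, Tendsto (fun n => fn n x) atTop (nhds (f x)) := fun x =>
    SimpleFunc.tendsto_approxOn hf (Set.mem_univ 0) (by simp)
  have hbd : ∀ n x, ‖fn n x‖ ≤ ‖f x‖ + ‖f x‖ := fun n x =>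
    SimpleFunc.norm_approxOn_zero_le hf (Set.mem_univ 0) x n
  have key : ∀ (w : Ω → ℝ), Integrable w P →
      Tendsto (fun n => ∫ ω, fn n (X ω) * w ω ∂P) atTop (nhds (∫ ω, f (X ω) * w ω ∂P)) := by
    intro w hw
    refine tendsto_integral_of_dominated_convergence (fun ω => (|M| + |M|) * |w ω|) ?_ ?_ ?_ ?_
    · exact fun n => (((fn n).measurable.comp hX).aestronglyMeasurable).mul hw.1
    · exact (hw.abs).const_mul _
    · intro n
      refine Eventually.of_forall fun ω => ?_
      rw [norm_mul, Real.norm_eq_abs (w ω)]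
      have h1 : ‖fn n (X ω)‖ ≤ |M| + |M| := by
        have h2 := hbd n (X ω)
        have h3 := hM (X ω)
        have h4 := le_abs_self M
        simp only [Real.norm_eq_abs] at h2 h3 ⊢
        linarith
      exact mul_le_mul_of_nonneg_right h1 (abs_nonneg _)
    · exact Eventually.of_forall fun ω => (htend (X ω)).mul_const _
  have heq : ∀ n, ∫ ω, fn n (X ω) * w₁ ω ∂P = ∫ ω, fn n (X ω) * w₂ ω ∂P := fun n => hsimp (fn n)
  have := key w₁ hw₁
  rw [show (fun n => ∫ ω, fn n (X ω) * w₁ ω ∂P) = fun n => ∫ ω, fn n (X ω) * w₂ ω ∂P from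
    funext heq] at this
  exact tendsto_nhds_unique this (key w₂ hw₂)

lemma indicator_prod_one {α β : Type*} (U : Set α) (V : Set β) (a : α) (b : β) :
    Set.indicator (U ×ˢ V) (fun _ => (1:ℝ)) (a, b)
      = Set.indicator U (fun _ => (1:ℝ)) a * Set.indicator V (fun _ => (1:ℝ)) b := by
  by_cases ha : a ∈ U <;> by_cases hb : b ∈ V <;>
    simp [Set.indicator_apply, ha, hb, Set.mem_prod]

lemma abs_indicator_one_le {α : Type*} (U : Set α) (a : α) :
    |Set.indicator U (fun _ => (1:ℝ)) a| ≤ 1 := by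
  by_cases ha : a ∈ U <;> simp [Set.indicator_apply, ha]

lemma indicator_one_nonneg {α : Type*} (U : Set α) (a : α) :
    0 ≤ Set.indicator U (fun _ => (1:ℝ)) a :=
  Set.indicator_nonneg (fun _ _ => zero_le_one) a

lemma meas_comp {γ δ : Type*} [MeasurableSpace γ] [MeasurableSpace δ]
    {X : Ω → γ} (hX : Measurable[mΩ] X) {f : γ → δ} (hf : Measurable f) :
    Measurable[mΩ] fun ω => f (X ω) :=
  hf.comp hX

lemma meas_ind_comp {γ : Type*} [MeasurableSpace γ] {X : Ω → γ} (hX : Measurable[mΩ] X)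
    {S : Set γ} (hS : MeasurableSet S) :
    Measurable[mΩ] fun ω => Set.indicator S (fun _ => (1:ℝ)) (X ω) :=
  (measurable_const.indicator hS).comp hX

lemma main_ci {𝒵 𝒞 : Type*} [MeasurableSpace 𝒵] [MeasurableSpace 𝒞]
    (Y₀ : Ω → ℝ) (Z : Ω → 𝒵) (C : Ω → 𝒞)
    (hY₀ : Measurable[mΩ] Y₀) (hZ : Measurable[mΩ] Z) (hC : Measurable[mΩ] C)
    (mC : MeasurableSpace Ω)
    (hmC : mC = MeasurableSpace.comap C inferInstance)
    (hmCle : mC ≤ mΩ)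
    (hCI : ∀ (φ : ℝ → ℝ) (ψ : 𝒵 → ℝ), Measurable φ → Measurable ψ →
        (∃ M, ∀ x, |φ x| ≤ M) → (∃ M, ∀ x, |ψ x| ≤ M) →
        P[fun ω => φ (Y₀ ω) * ψ (Z ω) | mC]
          =ᵐ[P] fun ω => (P[fun ω' => φ (Y₀ ω') | mC]) ω
                        * (P[fun ω' => ψ (Z ω') | mC]) ω) :
    ∀ (t : ℝ × 𝒞 → ℝ) (l : 𝒵 × 𝒞 → ℝ), Measurable t → Measurable l →
      (∃ M, ∀ x, |t x| ≤ M) → (∃ M, ∀ x, |l x| ≤ M) →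
      ∫ ω, t (Y₀ ω, C ω) * l (Z ω, C ω) ∂P
        = ∫ ω, t (Y₀ ω, C ω) * (P[fun ω' => l (Z ω', C ω')|mC]) ω ∂P := by
  have hCm : Measurable[mC] C := by
    rw [hmC]; exact fun s hs => ⟨s, hs, rfl⟩
  -- integrability of bounded a.e.-strongly measurable functions
  have bint : ∀ (f : Ω → ℝ), AEStronglyMeasurable[mΩ] f P → (∃ M, ∀ ω, |f ω| ≤ M) →
      Integrable f P := by
    rintro f hf ⟨M, hM⟩
    exact integrable_of_bdd hf hM
  -- pull-out of functions of C
  have pull : ∀ (k : 𝒞 → ℝ), Measurable k → (∃ M, ∀ x, |k x| ≤ M) →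
      ∀ (f : Ω → ℝ), Integrable f P →
      P[fun ω => k (C ω) * f ω|mC] =ᵐ[P] fun ω => k (C ω) * (P[f|mC]) ω := by
    rintro k hk ⟨M, hM⟩ f hf
    have hsm : StronglyMeasurable[mC] (fun ω => k (C ω)) :=
      (hk.comp hCm).stronglyMeasurable
    have hint : Integrable (fun ω => k (C ω) * f ω) P :=
      hf.bdd_mul ((hk.comp hC).aestronglyMeasurable)
        (c := M) (Eventually.of_forall fun ω => by simpa [Real.norm_eq_abs] using hM (C ω))
    exact condExp_mul_of_stronglyMeasurable_left hsm hint hf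
  -- base case: products
  have base : ∀ (φ : ℝ → ℝ) (h : 𝒞 → ℝ) (ψ : 𝒵 → ℝ) (k : 𝒞 → ℝ),
      Measurable φ → Measurable h → Measurable ψ → Measurable k →
      (∃ M, ∀ x, |φ x| ≤ M) → (∃ M, ∀ x, |h x| ≤ M) →
      (∃ M, ∀ x, |ψ x| ≤ M) → (∃ M, ∀ x, |k x| ≤ M) →
      ∫ ω, (φ (Y₀ ω) * h (C ω)) * (ψ (Z ω) * k (C ω)) ∂P
        = ∫ ω, (P[fun ω' => φ (Y₀ ω') * h (C ω')|mC]) ω * (ψ (Z ω) * k (C ω)) ∂P := by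
    rintro φ h ψ k hφ hh hψ hk ⟨Mφ, hMφ⟩ ⟨Mh, hMh⟩ ⟨Mψ, hMψ⟩ ⟨Mk, hMk⟩
    set cφ := P[fun ω => φ (Y₀ ω)|mC] with hcφ
    set cψ := P[fun ω => ψ (Z ω)|mC] with hcψ
    have hφY : Measurable[mΩ] (fun ω => φ (Y₀ ω)) := hφ.comp hY₀
    have hψZ : Measurable[mΩ] (fun ω => ψ (Z ω)) := hψ.comp hZ
    have iφ : Integrable (fun ω => φ (Y₀ ω)) P :=
      bint _ hφY.aestronglyMeasurable ⟨Mφ, fun ω => hMφ _⟩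
    have iψ : Integrable (fun ω => ψ (Z ω)) P :=
      bint _ hψZ.aestronglyMeasurable ⟨Mψ, fun ω => hMψ _⟩
    have prodbd : ∀ (a b : ℝ) (Ma Mb : ℝ), |a| ≤ Ma → |b| ≤ Mb → |a * b| ≤ |Ma| * |Mb| := by
      intro a b Ma Mb ha hb
      rw [abs_mul]
      exact mul_le_mul (ha.trans (le_abs_self _)) (hb.trans (le_abs_self _))
        (abs_nonneg _) (abs_nonneg _)
    have iφψ : Integrable (fun ω => φ (Y₀ ω) * ψ (Z ω)) P :=
      bint _ (hφY.mul hψZ).aestronglyMeasurable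
        ⟨|Mφ| * |Mψ|, fun ω => prodbd _ _ _ _ (hMφ _) (hMψ _)⟩
    have ihkC : Measurable[mΩ] (fun ω => h (C ω) * k (C ω)) :=
      (hh.comp hC).mul (hk.comp hC)
    -- LHS
    have lhs1 : ∫ ω, (φ (Y₀ ω) * h (C ω)) * (ψ (Z ω) * k (C ω)) ∂P
        = ∫ ω, (h (C ω) * k (C ω)) * (φ (Y₀ ω) * ψ (Z ω)) ∂P :=
      integral_congr_ae (Eventually.of_forall fun ω => by ring)
    have ipr : Integrable (fun ω => (h (C ω) * k (C ω)) * (φ (Y₀ ω) * ψ (Z ω))) P :=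
      iφψ.bdd_mul ihkC.aestronglyMeasurable
        (c := |Mh| * |Mk|) (Eventually.of_forall fun ω => by
          rw [Real.norm_eq_abs]; exact prodbd _ _ _ _ (hMh (C ω)) (hMk (C ω)))
    have epull : P[fun ω => (fun c => h c * k c) (C ω) * (φ (Y₀ ω) * ψ (Z ω))|mC]
        =ᵐ[P] fun ω => (h (C ω) * k (C ω)) * (P[fun ω' => φ (Y₀ ω') * ψ (Z ω')|mC]) ω :=
      pull (fun c => h c * k c) (hh.mul hk)
        ⟨|Mh| * |Mk|, fun x => prodbd _ _ _ _ (hMh x) (hMk x)⟩ _ iφψ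
    have eci := hCI φ ψ hφ hψ ⟨Mφ, hMφ⟩ ⟨Mψ, hMψ⟩
    have lhs2 : ∫ ω, (h (C ω) * k (C ω)) * (φ (Y₀ ω) * ψ (Z ω)) ∂P
        = ∫ ω, (h (C ω) * k (C ω)) * (cφ ω * cψ ω) ∂P := by
      rw [← integral_condExp hmCle (f := fun ω => (h (C ω) * k (C ω)) * (φ (Y₀ ω) * ψ (Z ω)))]
      refine integral_congr_ae (epull.trans ?_)
      filter_upwards [eci] with ω hω
      rw [hω]
    -- RHS
    have ecnd : P[fun ω => φ (Y₀ ω) * h (C ω)|mC] =ᵐ[P] fun ω => h (C ω) * cφ ω := by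
      have : (fun ω => φ (Y₀ ω) * h (C ω)) = fun ω => h (C ω) * φ (Y₀ ω) :=
        funext fun ω => mul_comm _ _
      rw [this]
      exact pull h hh ⟨Mh, hMh⟩ _ iφ
    set G := fun ω => (h (C ω) * k (C ω)) * cφ ω with hG
    have hGm : Measurable[mC] G :=
      (((hh.comp hCm).mul (hk.comp hCm))).mul stronglyMeasurable_condExp.measurable
    have hGi : Integrable G P :=
      integrable_condExp.bdd_mul ihkC.aestronglyMeasurable
        (c := |Mh| * |Mk|) (Eventually.of_forall fun ω => by
          rw [Real.norm_eq_abs]; exact prodbd _ _ _ _ (hMh (C ω)) (hMk (C ω)))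
    have hGψ : Integrable (fun ω => G ω * ψ (Z ω)) P :=
      (hGi.bdd_mul hψZ.aestronglyMeasurable
        (c := Mψ) (Eventually.of_forall fun ω => by simpa [Real.norm_eq_abs] using hMψ (Z ω))).congr
        (Eventually.of_forall fun ω => mul_comm _ _)
    have epullG : P[fun ω => G ω * ψ (Z ω)|mC] =ᵐ[P] fun ω => G ω * cψ ω :=
      condExp_mul_of_stronglyMeasurable_left hGm.stronglyMeasurable hGψ iψ
    have rhs1 : ∫ ω, (P[fun ω' => φ (Y₀ ω') * h (C ω')|mC]) ω * (ψ (Z ω) * k (C ω)) ∂P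
        = ∫ ω, G ω * ψ (Z ω) ∂P := by
      refine integral_congr_ae ?_
      filter_upwards [ecnd] with ω hω
      rw [hω, hG]; ring
    have rhs2 : ∫ ω, G ω * ψ (Z ω) ∂P = ∫ ω, (h (C ω) * k (C ω)) * (cφ ω * cψ ω) ∂P := by
      rw [← integral_condExp hmCle (f := fun ω => G ω * ψ (Z ω))]
      refine integral_congr_ae (epullG.trans (Eventually.of_forall fun ω => by rw [hG]; ring))
    rw [lhs1, lhs2, rhs1, rhs2]
  -- measurability and integrability of indicator compositions
  have hYC : Measurable[mΩ] (fun ω => (Y₀ ω, C ω)) := hY₀.prodMk hC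
  have hZC : Measurable[mΩ] (fun ω => (Z ω, C ω)) := hZ.prodMk hC
  -- step A : for a rectangle v in (Z, C), and any S
  have stepA : ∀ (U' : Set 𝒵) (V' : Set 𝒞), MeasurableSet U' → MeasurableSet V' →
      ∀ S : Set (ℝ × 𝒞), MeasurableSet S →
      ∫ ω, Set.indicator S (fun _ => (1:ℝ)) (Y₀ ω, C ω) *
          (Set.indicator U' (fun _ => (1:ℝ)) (Z ω) * Set.indicator V' (fun _ => (1:ℝ)) (C ω)) ∂P
        = ∫ ω, Set.indicator S (fun _ => (1:ℝ)) (Y₀ ω, C ω) *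
          (P[fun ω' => Set.indicator U' (fun _ => (1:ℝ)) (Z ω') *
            Set.indicator V' (fun _ => (1:ℝ)) (C ω')|mC]) ω ∂P := by
    intro U' V' hU' hV'
    have hvm : Measurable[mΩ] (fun ω => Set.indicator U' (fun _ => (1:ℝ)) (Z ω) *
        Set.indicator V' (fun _ => (1:ℝ)) (C ω)) :=
      (meas_ind_comp hZ hU').mul (meas_ind_comp hC hV')
    set v := fun ω => Set.indicator U' (fun _ => (1:ℝ)) (Z ω) *
      Set.indicator V' (fun _ => (1:ℝ)) (C ω) with hv
    have hvb : ∀ ω, |v ω| ≤ 1 := by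
      intro ω
      rw [hv, abs_mul]
      calc |Set.indicator U' (fun _ => (1:ℝ)) (Z ω)| * |Set.indicator V' (fun _ => (1:ℝ)) (C ω)|
          ≤ 1 * 1 := mul_le_mul (abs_indicator_one_le _ _) (abs_indicator_one_le _ _)
            (abs_nonneg _) zero_le_one
        _ = 1 := one_mul 1
    have hvi : Integrable v P := bint _ hvm.aestronglyMeasurable ⟨1, hvb⟩
    have hv0 : 0 ≤ᵐ[P] v := Eventually.of_forall fun ω =>
      mul_nonneg (indicator_one_nonneg _ _) (indicator_one_nonneg _ _)
    refine pairing_eq_of_rect hY₀ hC hvi integrable_condExp hv0 (condExp_nonneg hv0) ?_ ?_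
    · intro U V hU hV
      have hrw : ∀ ω, Set.indicator (U ×ˢ V) (fun _ => (1:ℝ)) (Y₀ ω, C ω)
          = Set.indicator U (fun _ => (1:ℝ)) (Y₀ ω) * Set.indicator V (fun _ => (1:ℝ)) (C ω) :=
        fun ω => indicator_prod_one U V _ _
      simp_rw [hrw]
      refine (base (fun x => Set.indicator U (fun _ => (1:ℝ)) x)
        (fun c => Set.indicator V (fun _ => (1:ℝ)) c)
        (fun z => Set.indicator U' (fun _ => (1:ℝ)) z)
        (fun c => Set.indicator V' (fun _ => (1:ℝ)) c)
        (measurable_const.indicator hU) (measurable_const.indicator hV) (measurable_const.indicator hU') (measurable_const.indicator hV')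
        ⟨1, fun x => abs_indicator_one_le _ _⟩ ⟨1, fun x => abs_indicator_one_le _ _⟩
        ⟨1, fun x => abs_indicator_one_le _ _⟩ ⟨1, fun x => abs_indicator_one_le _ _⟩).trans ?_
      exact (integral_mul_condexp_symm hmCle
        ((meas_ind_comp hY₀ hU).mul (meas_ind_comp hC hV)) hvm
        (Mu := 1) (Mv := 1)
        (fun ω => by
          rw [Pi.mul_apply, abs_mul]
          calc |Set.indicator U (fun _ => (1:ℝ)) (Y₀ ω)| * |Set.indicator V (fun _ => (1:ℝ)) (C ω)|
              ≤ 1 * 1 := mul_le_mul (abs_indicator_one_le _ _) (abs_indicator_one_le _ _)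
                (abs_nonneg _) zero_le_one
            _ = 1 := one_mul 1) hvb).symm
    · exact (integral_condExp hmCle).symm
  -- step B : for any S and any S'
  have stepB : ∀ S : Set (ℝ × 𝒞), MeasurableSet S →
      ∀ S' : Set (𝒵 × 𝒞), MeasurableSet S' →
      ∫ ω, Set.indicator S' (fun _ => (1:ℝ)) (Z ω, C ω) *
          Set.indicator S (fun _ => (1:ℝ)) (Y₀ ω, C ω) ∂P
        = ∫ ω, Set.indicator S' (fun _ => (1:ℝ)) (Z ω, C ω) *
          (P[fun ω' => Set.indicator S (fun _ => (1:ℝ)) (Y₀ ω', C ω')|mC]) ω ∂P := by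
    intro S hS
    have hwm : Measurable[mΩ] (fun ω => Set.indicator S (fun _ => (1:ℝ)) (Y₀ ω, C ω)) :=
      meas_ind_comp hYC hS
    set w := fun ω => Set.indicator S (fun _ => (1:ℝ)) (Y₀ ω, C ω) with hw
    have hwb : ∀ ω, |w ω| ≤ 1 := fun ω => abs_indicator_one_le _ _
    have hwi : Integrable w P := bint _ hwm.aestronglyMeasurable ⟨1, hwb⟩
    have hw0 : 0 ≤ᵐ[P] w := Eventually.of_forall fun ω => indicator_one_nonneg _ _
    refine pairing_eq_of_rect hZ hC hwi integrable_condExp hw0 (condExp_nonneg hw0) ?_ ?_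
    · intro U' V' hU' hV'
      have hrw : ∀ ω, Set.indicator (U' ×ˢ V') (fun _ => (1:ℝ)) (Z ω, C ω)
          = Set.indicator U' (fun _ => (1:ℝ)) (Z ω) * Set.indicator V' (fun _ => (1:ℝ)) (C ω) :=
        fun ω => indicator_prod_one U' V' _ _
      simp_rw [hrw]
      have hvm : Measurable[mΩ] (fun ω => Set.indicator U' (fun _ => (1:ℝ)) (Z ω) *
          Set.indicator V' (fun _ => (1:ℝ)) (C ω)) :=
        (meas_ind_comp hZ hU').mul (meas_ind_comp hC hV')
      set v := fun ω => Set.indicator U' (fun _ => (1:ℝ)) (Z ω) *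
        Set.indicator V' (fun _ => (1:ℝ)) (C ω) with hv
      have hvb : ∀ ω, |v ω| ≤ 1 := by
        intro ω
        rw [hv, abs_mul]
        calc |Set.indicator U' (fun _ => (1:ℝ)) (Z ω)| * |Set.indicator V' (fun _ => (1:ℝ)) (C ω)|
            ≤ 1 * 1 := mul_le_mul (abs_indicator_one_le _ _) (abs_indicator_one_le _ _)
              (abs_nonneg _) zero_le_one
          _ = 1 := one_mul 1
      calc ∫ ω, v ω * w ω ∂P = ∫ ω, w ω * v ω ∂P := by simp_rw [mul_comm]
        _ = ∫ ω, w ω * (P[v|mC]) ω ∂P := stepA U' V' hU' hV' S hS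
        _ = ∫ ω, (P[w|mC]) ω * v ω ∂P := by
            rw [← integral_mul_condexp_symm hmCle hwm hvm (Mu := 1) (Mv := 1) hwb hvb]
        _ = ∫ ω, v ω * (P[w|mC]) ω ∂P := by simp_rw [mul_comm]
    · exact (integral_condExp hmCle).symm
  -- conclusion
  intro t l ht hl hMt hMl
  -- step C/D : for any S, pair indicator of S against l and flip
  have stepD : ∀ S : Set (ℝ × 𝒞), MeasurableSet S →
      ∫ ω, Set.indicator S (fun _ => (1:ℝ)) (Y₀ ω, C ω) * l (Z ω, C ω) ∂P
        = ∫ ω, Set.indicator S (fun _ => (1:ℝ)) (Y₀ ω, C ω) *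
            (P[fun ω' => l (Z ω', C ω')|mC]) ω ∂P := by
    intro S hS
    have hwm : Measurable[mΩ] (fun ω => Set.indicator S (fun _ => (1:ℝ)) (Y₀ ω, C ω)) :=
      meas_ind_comp hYC hS
    set w := fun ω => Set.indicator S (fun _ => (1:ℝ)) (Y₀ ω, C ω) with hw
    have hwb : ∀ ω, |w ω| ≤ 1 := fun ω => abs_indicator_one_le _ _
    have hwi : Integrable w P := bint _ hwm.aestronglyMeasurable ⟨1, hwb⟩
    have hlZC : Measurable[mΩ] (fun ω => l (Z ω, C ω)) := meas_comp hZC hl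
    obtain ⟨Ml, hMl'⟩ := hMl
    have stepC : ∫ ω, l (Z ω, C ω) * w ω ∂P = ∫ ω, l (Z ω, C ω) * (P[w|mC]) ω ∂P :=
      pairing_ext hZC hwi integrable_condExp (stepB S hS) l hl ⟨Ml, hMl'⟩
    have flip : ∫ ω, l (Z ω, C ω) * (P[w|mC]) ω ∂P
        = ∫ ω, (P[fun ω' => l (Z ω', C ω')|mC]) ω * w ω ∂P :=
      integral_mul_condexp_symm hmCle hlZC hwm (Mu := Ml) (Mv := 1)
        (fun ω => hMl' _) hwb
    calc ∫ ω, w ω * l (Z ω, C ω) ∂P = ∫ ω, l (Z ω, C ω) * w ω ∂P := by simp_rw [mul_comm]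
      _ = ∫ ω, (P[fun ω' => l (Z ω', C ω')|mC]) ω * w ω ∂P := stepC.trans flip
      _ = ∫ ω, w ω * (P[fun ω' => l (Z ω', C ω')|mC]) ω ∂P := by simp_rw [mul_comm]
  have hlZC : Measurable[mΩ] (fun ω => l (Z ω, C ω)) := meas_comp hZC hl
  obtain ⟨Ml, hMl'⟩ := hMl
  have hlZCi : Integrable (fun ω => l (Z ω, C ω)) P :=
    bint _ hlZC.aestronglyMeasurable ⟨Ml, fun ω => hMl' _⟩
  exact pairing_ext hYC hlZCi integrable_condExp stepD t ht hMt

end IPWAux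

/-- Unbiasedness of the IPW estimating function (equation (6)): if `π` is a
version of the extended propensity score `E[A | σ(Y₀, Z, C)]` with `π < 1` a.s.
and `Y₀` and `Z` are conditionally independent given `σ(C)`, then for all
bounded measurable `t` and `l`,
`E[((1-A)/(1-π)) t(Y₀,C) (l(Z,C) - E[l(Z,C) | σ(C)])] = 0`. -/
theorem ipw_estimating_function_unbiased
    {Ω : Type*} {mΩ : MeasurableSpace Ω} (P : Measure Ω) [IsProbabilityMeasure P]
    {𝒵 𝒞 : Type*} [MeasurableSpace 𝒵] [MeasurableSpace 𝒞]
    (A Y₀ π : Ω → ℝ) (Z : Ω → 𝒵) (C : Ω → 𝒞)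
    (hA : Measurable A) (hY₀ : Measurable Y₀)
    (hZ : Measurable Z) (hC : Measurable C)
    (hAval : ∀ ω, A ω = 0 ∨ A ω = 1)
    (𝒢 mC : MeasurableSpace Ω)
    (h𝒢 : 𝒢 = MeasurableSpace.comap Y₀ inferInstance ⊔
              MeasurableSpace.comap Z inferInstance ⊔
              MeasurableSpace.comap C inferInstance)
    (hmC : mC = MeasurableSpace.comap C inferInstance)
    (h𝒢le : 𝒢 ≤ mΩ)
    (hπ : π =ᵐ[P] P[A | 𝒢])
    (hπlt : ∀ᵐ ω ∂P, π ω < 1)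
    -- conditional independence of `Y₀` and `Z` given `σ(C)`
    (hCI : ∀ (φ : ℝ → ℝ) (ψ : 𝒵 → ℝ), Measurable φ → Measurable ψ →
        (∃ M, ∀ x, |φ x| ≤ M) → (∃ M, ∀ x, |ψ x| ≤ M) →
        P[fun ω => φ (Y₀ ω) * ψ (Z ω) | mC]
          =ᵐ[P] fun ω => (P[fun ω' => φ (Y₀ ω') | mC]) ω
                        * (P[fun ω' => ψ (Z ω') | mC]) ω) :
    ∀ (t : ℝ × 𝒞 → ℝ) (l : 𝒵 × 𝒞 → ℝ), Measurable t → Measurable l →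
      (∃ M, ∀ x, |t x| ≤ M) → (∃ M, ∀ x, |l x| ≤ M) →
      Integrable (fun ω => (1 - A ω) / (1 - π ω) * t (Y₀ ω, C ω) *
        (l (Z ω, C ω) - (P[fun ω' => l (Z ω', C ω') | mC]) ω)) P →
      ∫ ω, (1 - A ω) / (1 - π ω) * t (Y₀ ω, C ω) *
        (l (Z ω, C ω) - (P[fun ω' => l (Z ω', C ω') | mC]) ω) ∂P = 0 := by
  rintro t l ht hl ⟨Mt, hMt⟩ ⟨Ml, hMl⟩ hInt
  have hmC𝒢 : mC ≤ 𝒢 := by rw [hmC, h𝒢]; exact le_sup_right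
  have hmCle : mC ≤ mΩ := hmC𝒢.trans h𝒢le
  -- measurability with respect to 𝒢
  have hY𝒢 : Measurable[𝒢] Y₀ := by
    rw [h𝒢]; exact measurable_iff_comap_le.mpr (le_sup_left.trans le_sup_left)
  have hZ𝒢 : Measurable[𝒢] Z := by
    rw [h𝒢]; exact measurable_iff_comap_le.mpr (le_sup_right.trans le_sup_left)
  have hC𝒢 : Measurable[𝒢] C := by
    rw [h𝒢]; exact measurable_iff_comap_le.mpr le_sup_right
  have htYC𝒢 : Measurable[𝒢] (fun ω => t (Y₀ ω, C ω)) := ht.comp (hY𝒢.prodMk hC𝒢)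
  have hlZC𝒢 : Measurable[𝒢] (fun ω => l (Z ω, C ω)) := hl.comp (hZ𝒢.prodMk hC𝒢)
  have hhl𝒢 : Measurable[𝒢] (P[fun ω' => l (Z ω', C ω')| mC]) :=
    (stronglyMeasurable_condExp.measurable).mono hmC𝒢 le_rfl
  have hπ'𝒢 : Measurable[𝒢] (P[A|𝒢]) := stronglyMeasurable_condExp.measurable
  -- the 𝒢-measurable integrand with the true conditional expectation π'
  set F := fun ω => t (Y₀ ω, C ω) * (l (Z ω, C ω) - (P[fun ω' => l (Z ω', C ω')| mC]) ω)
    with hF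
  set g := fun ω => F ω / (1 - (P[A|𝒢]) ω) with hg
  have hF𝒢 : Measurable[𝒢] F := htYC𝒢.mul (hlZC𝒢.sub hhl𝒢)
  have hg𝒢 : Measurable[𝒢] g := hF𝒢.div (measurable_const.sub hπ'𝒢)
  -- replace π by π' a.e.
  have hae : (fun ω => (1 - A ω) / (1 - π ω) * t (Y₀ ω, C ω) *
      (l (Z ω, C ω) - (P[fun ω' => l (Z ω', C ω')| mC]) ω))
      =ᵐ[P] fun ω => (1 - A ω) * g ω := by
    filter_upwards [hπ] with ω hω
    rw [hg, hF]
    simp only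
    rw [hω]
    ring
  have hint2 : Integrable (fun ω => (1 - A ω) * g ω) P := hInt.congr hae
  have hAi : Integrable A P := IPWAux.integrable_of_bdd hA.aestronglyMeasurable
    (M := 1) (fun ω => by rcases hAval ω with h | h <;> simp [h])
  have h1A : Integrable (fun ω => 1 - A ω) P := (integrable_const 1).sub hAi
  -- conditioning on 𝒢
  have e1 : P[fun ω => g ω * (1 - A ω)|𝒢] =ᵐ[P] fun ω => g ω * (P[fun ω => 1 - A ω|𝒢]) ω :=
    condExp_mul_of_stronglyMeasurable_left hg𝒢.stronglyMeasurable
      (hint2.congr (Filter.Eventually.of_forall fun ω => mul_comm _ _)) h1A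
  have e2 : P[fun ω => 1 - A ω|𝒢] =ᵐ[P] fun ω => 1 - (P[A|𝒢]) ω := by
    have h3 : P[fun ω => (fun _ => (1:ℝ)) ω - A ω|𝒢]
        =ᵐ[P] fun ω => (P[fun _ => (1:ℝ)|𝒢]) ω - (P[A|𝒢]) ω :=
      condExp_sub (integrable_const 1) hAi 𝒢
    refine h3.trans ?_
    have h4 : P[fun _ => (1:ℝ)|𝒢] =ᵐ[P] fun _ => (1:ℝ) := by
      rw [condExp_const h𝒢le (1:ℝ)]
    filter_upwards [h4] with ω hω
    rw [hω]
  have step0 : ∫ ω, (1 - A ω) / (1 - π ω) * t (Y₀ ω, C ω) *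
      (l (Z ω, C ω) - (P[fun ω' => l (Z ω', C ω')| mC]) ω) ∂P = ∫ ω, F ω ∂P := by
    calc ∫ ω, (1 - A ω) / (1 - π ω) * t (Y₀ ω, C ω) *
        (l (Z ω, C ω) - (P[fun ω' => l (Z ω', C ω')| mC]) ω) ∂P
        = ∫ ω, (1 - A ω) * g ω ∂P := integral_congr_ae hae
      _ = ∫ ω, g ω * (1 - A ω) ∂P := by simp_rw [mul_comm]
      _ = ∫ ω, (P[fun ω => g ω * (1 - A ω)|𝒢]) ω ∂P := by
          rw [integral_condExp h𝒢le]
      _ = ∫ ω, g ω * (1 - (P[A|𝒢]) ω) ∂P := by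
          refine integral_congr_ae (e1.trans ?_)
          filter_upwards [e2] with ω hω
          rw [hω]
      _ = ∫ ω, F ω ∂P := by
          refine integral_congr_ae ?_
          filter_upwards [hπ, hπlt] with ω hω hlt
          have hπ'lt : (P[A|𝒢]) ω < 1 := hω ▸ hlt
          have hne : 1 - (P[A|𝒢]) ω ≠ 0 := sub_ne_zero.mpr hπ'lt.ne'
          rw [hg]
          simp only
          rw [div_mul_cancel₀ _ hne]
  rw [step0]
  -- now use conditional independence
  have htl : Integrable (fun ω => t (Y₀ ω, C ω) * l (Z ω, C ω)) P := by
    refine IPWAux.integrable_of_bdd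
      (((ht.comp (hY₀.prodMk hC)).mul (hl.comp (hZ.prodMk hC))).aestronglyMeasurable)
      (M := |Mt| * |Ml|) (fun ω => ?_)
    rw [abs_mul]
    exact mul_le_mul ((hMt _).trans (le_abs_self _)) ((hMl _).trans (le_abs_self _))
      (abs_nonneg _) (abs_nonneg _)
  have hth : Integrable (fun ω => t (Y₀ ω, C ω) * (P[fun ω' => l (Z ω', C ω')| mC]) ω) P :=
    integrable_condExp.bdd_mul ((ht.comp (hY₀.prodMk hC)).aestronglyMeasurable)
      (c := Mt) (Eventually.of_forall fun ω => by rw [Real.norm_eq_abs]; exact hMt _)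
  have hsplit : ∫ ω, F ω ∂P = ∫ ω, t (Y₀ ω, C ω) * l (Z ω, C ω) ∂P -
      ∫ ω, t (Y₀ ω, C ω) * (P[fun ω' => l (Z ω', C ω')| mC]) ω ∂P := by
    rw [← integral_sub htl hth]
    refine integral_congr_ae (Filter.Eventually.of_forall fun ω => ?_)
    rw [hF]
    simp only
    ring
  rw [hsplit, IPWAux.main_ci (P := P) Y₀ Z C hY₀ hZ hC mC hmC hmCle hCI t l ht hl
    ⟨Mt, hMt⟩ ⟨Ml, hMl⟩, sub_self]
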